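/- Let S be a commutative semigroup with zero, G = Γ(S), and b a vertex with b² ≠ 0. Let T_b = {x ∈ V(G) : xb = 0, x ≠ b, deg(x) = 1} be the set of end vertices adjacent to b. Then T_b ∪ {0} is a sub-semigroup of S (i.e., closed under multiplication). -/

import Mathlib

/-- A zero-divisor: a nonzero element annihilated by some nonzero element. -/
def IsZeroDivisorElem {S : Type*} [Mul S] [Zero S] (x : S) : Prop :=
  x ≠ 0 ∧ ∃ y : S, y ≠ 0 ∧ x * y = 0

/-- The zero-divisor graph Γ(S) of a commutative semigroup with zero:
vertices are the nonzero zero-divisors, two distinct vertices adjacent iff their product is 0. -/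
def zdGraph (S : Type*) [CommSemigroup S] [Zero S] :
    SimpleGraph {x : S // IsZeroDivisorElem x} where
  Adj a b := a ≠ b ∧ (a : S) * (b : S) = 0
  symm := by
    constructor
    rintro a b ⟨h1, h2⟩
    exact ⟨h1.symm, by rwa [mul_comm] at h2⟩
  loopless := by constructor; rintro a ⟨h, _⟩; exact h rfl

/-- An end vertex: a vertex of degree one (exactly one neighbor). -/
def IsEndVertex {V : Type*} (G : SimpleGraph V) (v : V) : Prop :=
  ∃! u, G.Adj v u

/-- An internal vertex: degree ≥ 2 and no neighbor of degree 1. -/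
def IsInternal {V : Type*} (G : SimpleGraph V) (v : V) : Prop :=
  (∃ u, G.Adj v u) ∧ ¬ IsEndVertex G v ∧ ∀ u, G.Adj v u → ¬ IsEndVertex G u

/-- C(a,b): the elements of S that are vertices whose neighborhood is exactly {a, b}. -/
def cSet (S : Type*) [CommSemigroup S] [Zero S]
    (a b : {x : S // IsZeroDivisorElem x}) : Set S :=
  {x : S | ∃ h : IsZeroDivisorElem x, (zdGraph S).neighborSet ⟨x, h⟩ = {a, b}}

/-- T_a: the elements of S that are end vertices adjacent to the vertex a. -/
def tSet (S : Type*) [CommSemigroup S] [Zero S]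
    (a : {x : S // IsZeroDivisorElem x}) : Set S :=
  {x : S | ∃ h : IsZeroDivisorElem x,
    (zdGraph S).Adj ⟨x, h⟩ a ∧ IsEndVertex (zdGraph S) ⟨x, h⟩}

/-- If b is a vertex with b² ≠ 0, then T_b ∪ {0} is closed under multiplication. -/
theorem stmt3 {S : Type*} [CommSemigroup S] [Zero S] (hz : ∀ x : S, 0 * x = 0)
    (b : {s : S // IsZeroDivisorElem s}) (hb : (b : S) * (b : S) ≠ 0) :
    ∀ x ∈ (tSet S b ∪ {0} : Set S), ∀ y ∈ (tSet S b ∪ {0} : Set S),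
      x * y ∈ (tSet S b ∪ {0} : Set S) := by
  have hz' : ∀ x : S, x * 0 = 0 := fun x => by rw [mul_comm]; exact hz x
  rintro x hx y hy
  rcases hx with hx | hx
  swap
  · simp only [Set.mem_singleton_iff] at hx; subst hx; right; simp [hz]
  rcases hy with hy | hy
  swap
  · simp only [Set.mem_singleton_iff] at hy; subst hy; right; simp [hz']
  obtain ⟨hxz, hxadj, hxend⟩ := hx
  obtain ⟨hyz, hyadj, hyend⟩ := hy
  have hxb : x * (b : S) = 0 := hxadj.2
  have hyb : y * (b : S) = 0 := hyadj.2
  have uniqX : ∀ u, (zdGraph S).Adj ⟨x, hxz⟩ u → u = b := fun u hu => hxend.unique hu hxadj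
  have uniqY : ∀ u, (zdGraph S).Adj ⟨y, hyz⟩ u → u = b := fun u hu => hyend.unique hu hyadj
  have pb : x * y * (b : S) = 0 := by rw [mul_assoc, hyb, hz']
  by_cases hp : x * y = 0
  · right; simp [hp]
  left
  have hpz : IsZeroDivisorElem (x * y) := ⟨hp, b, b.2.1, pb⟩
  have hne : (⟨x * y, hpz⟩ : {s : S // IsZeroDivisorElem s}) ≠ b := by
    intro h
    have hv : x * y = (b : S) := congrArg Subtype.val h
    exact hb (hv ▸ pb)
  refine ⟨hpz, ⟨hne, pb⟩, b, ⟨hne, pb⟩, ?_⟩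
  rintro z ⟨hzp, hzmul⟩
  -- hzmul : x * y * z = 0
  have h1 : (z : S) * x * y = 0 := by
    rw [mul_comm (z : S) x, mul_assoc, mul_comm (z : S) y, ← mul_assoc]
    exact hzmul
  by_cases hzx : (z : S) * x = 0
  · by_cases hzx' : (z : S) = x
    · have hxx : x * x = 0 := hzx' ▸ hzx
      by_cases hxy : x = x * y
      · apply uniqX
        refine ⟨?_, ?_⟩
        · intro h
          exact hzp (Subtype.ext (show x * y = (z : S) by rw [← hxy, ← hzx']))
        · show x * (z : S) = 0
          rw [hzx']; exact hxx
      · exfalso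
        have : (⟨x * y, hpz⟩ : {s : S // IsZeroDivisorElem s}) = b := by
          apply uniqX
          refine ⟨fun h => hxy (congrArg Subtype.val h), ?_⟩
          show x * (x * y) = 0
          rw [← mul_assoc, hxx, hz]
        exact hne this
    · apply uniqX
      refine ⟨fun h => hzx' (congrArg Subtype.val h).symm, ?_⟩
      show x * (z : S) = 0
      rw [mul_comm]; exact hzx
  · by_cases hw : (z : S) * x = y
    · have hyy : y * y = 0 := by rw [← hw] at h1 ⊢; exact h1
      by_cases hxy : x * y = y
      · apply uniqY
        refine ⟨?_, ?_⟩
        · intro h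
          apply hzp
          apply Subtype.ext
          show x * y = (z : S)
          rw [hxy]; exact congrArg Subtype.val h
        · show y * (z : S) = 0
          rw [← hxy]; exact hzmul
      · exfalso
        have : (⟨x * y, hpz⟩ : {s : S // IsZeroDivisorElem s}) = b := by
          apply uniqY
          refine ⟨fun h => hxy (congrArg Subtype.val h).symm, ?_⟩
          show y * (x * y) = 0
          rw [mul_comm, mul_assoc, hyy, hz']
        exact hne this
    · exfalso
      have hwz : IsZeroDivisorElem ((z : S) * x) := ⟨hzx, y, hyz.1, h1⟩
      have : (⟨(z : S) * x, hwz⟩ : {s : S // IsZeroDivisorElem s}) = b := by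
        apply uniqY
        refine ⟨fun h => hw (congrArg Subtype.val h).symm, ?_⟩
        show y * ((z : S) * x) = 0
        rw [mul_comm]; exact h1
      have hv : (z : S) * x = (b : S) := congrArg Subtype.val this
      apply hb
      calc (b : S) * (b : S) = ((z : S) * x) * (b : S) := by rw [hv]
        _ = (z : S) * (x * (b : S)) := mul_assoc _ _ _
        _ = 0 := by rw [hxb, hz']
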